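/- Let 0 < α < 1, β > 0 with α + β > 1, r > 0, and let m ≥ 0 be an integer. If m + 3/2 < (3/2)·(2α + β + 2√(α² + αβ))/(βr), then every positive solution (A_n)_{n≥−m} of A_{n+1} = A_n·(α + β/(1 + A_{n−m}^r)) converges to x̄ = ((α + β − 1)/(1 − α))^{1/r} as n → ∞. -/

import Mathlib

open Filter Finset

namespace BQ

lemma tendsto_toNat_sub_atTop (N : ℤ) :
    Tendsto (fun n : ℤ => (n - N).toNat) atTop atTop := by
  apply tendsto_atTop_atTop.2
  intro b
  exact ⟨N + b, fun n hn => by omega⟩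

lemma tendsto_of_shift {y : ℤ → ℝ} {c : ℝ} (N : ℤ)
    (h : Tendsto (fun i : ℕ => y (N + i)) atTop (nhds c)) :
    Tendsto y atTop (nhds c) := by
  have h2 : Tendsto (fun n : ℤ => y (N + ((n - N).toNat : ℤ))) atTop (nhds c) :=
    h.comp (tendsto_toNat_sub_atTop N)
  apply h2.congr'
  filter_upwards [eventually_ge_atTop N] with n hn
  congr 1
  omega

lemma telescope {k : ℕ} {g : ℝ → ℝ} {y : ℤ → ℝ}
    (hrec : ∀ n : ℤ, 0 ≤ n → y (n + 1) = y n + g (y (n - k)))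
    (a : ℤ) (ha : 0 ≤ a) (s : ℕ) :
    y (a + s) = y a + ∑ i ∈ range s, g (y (a + i - k)) := by
  induction s with
  | zero => simp
  | succ s ih =>
      have h1 : y (a + s + 1) = y (a + s) + g (y (a + s - k)) := hrec (a + s) (by omega)
      have h2 : a + ((s : ℤ) + 1) = a + s + 1 := by ring
      rw [Finset.sum_range_succ, show ((s+1 : ℕ) : ℤ) = (s : ℤ) + 1 by push_cast; ring, h2, h1, ih]
      ring

lemma last_nonpos {y : ℤ → ℝ} {a b : ℤ} (hab : a ≤ b) (hya : y a ≤ 0) (hyb : 0 < y b) :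
    ∃ p, a ≤ p ∧ p < b ∧ y p ≤ 0 ∧ ∀ i, p < i → i ≤ b → 0 < y i := by
  classical
  set s := (Finset.Icc a b).filter (fun j => y j ≤ 0) with hs
  have hne : s.Nonempty := ⟨a, by simp [hs, hab, hya]⟩
  have hpmem := s.max'_mem hne
  have hmem : s.max' hne ∈ (Finset.Icc a b).filter (fun j => y j ≤ 0) := by
    rwa [← hs]
  rw [Finset.mem_filter, Finset.mem_Icc] at hmem
  have hpb : s.max' hne < b := by
    rcases lt_or_eq_of_le hmem.1.2 with h | h
    · exact h
    · exact absurd hmem.2 (by rw [h]; exact not_le.2 hyb)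
  refine ⟨s.max' hne, hmem.1.1, hpb, hmem.2, fun i hpi hib => ?_⟩
  by_contra hcon
  push_neg at hcon
  have hin : i ∈ s := by
    rw [hs, Finset.mem_filter, Finset.mem_Icc]
    exact ⟨⟨le_trans hmem.1.1 hpi.le, hib⟩, hcon⟩
  have := s.le_max' i hin
  omega

lemma bound_step1 {k : ℕ} {G : ℝ} {g : ℝ → ℝ} {y : ℤ → ℝ}
    (hrec : ∀ n : ℤ, 0 ≤ n → y (n + 1) = y n + g (y (n - k)))
    (hGle : ∀ u, g u ≤ G)
    {p : ℤ} (hp : 0 ≤ p) (hyp : y p ≤ 0) :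
    ∀ j, p ≤ j → j - p ≤ k + 1 → y j ≤ ((j : ℝ) - p) * G := by
  intro j hj
  refine Int.le_induction (motive := fun j _ => j - p ≤ k + 1 → y j ≤ ((j : ℝ) - p) * G) ?_ ?_ j hj
  · intro _
    simpa using hyp
  · intro j hpj ih hjk
    have h1 : y (j + 1) = y j + g (y (j - k)) := hrec j (by omega)
    have h2 : y j ≤ ((j : ℝ) - p) * G := ih (by omega)
    have h3 := hGle (y (j - k))
    rw [h1]
    push_cast
    nlinarith [h2, h3]

lemma bound_on_semicycle {k : ℕ} {G : ℝ} {g : ℝ → ℝ} {y : ℤ → ℝ}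
    (hrec : ∀ n : ℤ, 0 ≤ n → y (n + 1) = y n + g (y (n - k)))
    (hG : 0 ≤ G) (hGle : ∀ u, g u ≤ G)
    (hneg : ∀ u, 0 < u → g u < 0)
    {p n : ℤ} (hp : 0 ≤ p) (hpn : p ≤ n) (hyp : y p ≤ 0)
    (hpos : ∀ i, p < i → i ≤ n → 0 < y i) :
    y n ≤ ((k : ℝ) + 1) * G := by
  rcases le_or_gt (n - p) (k + 1) with hc | hc
  · have h1 := bound_step1 hrec hGle hp hyp n hpn hc
    have h2 : (n : ℝ) - p ≤ (k : ℝ) + 1 := by exact_mod_cast hc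
    nlinarith [h1, h2, hG]
  · have key : ∀ j, p + k + 1 ≤ j → j ≤ n → y j ≤ ((k : ℝ) + 1) * G := by
      intro j hj
      refine Int.le_induction (motive := fun j _ => j ≤ n → y j ≤ ((k : ℝ) + 1) * G) ?_ ?_ j hj
      · intro _
        have h1 := bound_step1 hrec hGle hp hyp (p + k + 1) (by omega) (by omega)
        calc y (p + k + 1) ≤ (((p + k + 1 : ℤ) : ℝ) - p) * G := by exact_mod_cast h1
          _ = ((k : ℝ) + 1) * G := by push_cast; ring
      · intro j hpj ih hjn
        have h1 : y (j + 1) = y j + g (y (j - k)) := hrec j (by omega)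
        have h2 : 0 < y (j - k) := hpos (j - k) (by omega) (by omega)
        have h3 := hneg _ h2
        have h4 := ih (by omega)
        linarith [h1.le, h3, h4]
    exact key n (by omega) le_rfl

section
variable {k : ℕ} {G L : ℝ} {g : ℝ → ℝ} {y : ℤ → ℝ}

lemma eventually_le_bound
    (hrec : ∀ n : ℤ, 0 ≤ n → y (n + 1) = y n + g (y (n - k)))
    (hG : 0 ≤ G) (hGle : ∀ u, g u ≤ G)
    (hneg : ∀ u, 0 < u → g u < 0)
    {a : ℤ} (ha : 0 ≤ a) (hya : y a ≤ 0) :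
    ∀ n, a ≤ n → y n ≤ ((k : ℝ) + 1) * G := by
  intro n hn
  rcases le_or_gt (y n) 0 with h | h
  · nlinarith [hG]
  rcases eq_or_lt_of_le hn with rfl | hlt
  · linarith
  obtain ⟨p, hap, hpn, hyp, hpos⟩ := last_nonpos hn hya h
  exact bound_on_semicycle hrec hG hGle hneg (by omega) hpn.le hyp hpos

lemma tendsto_of_eventually_pos (hcont : Continuous g)
    (hneg : ∀ u, 0 < u → g u < 0)
    (hrec : ∀ n : ℤ, 0 ≤ n → y (n + 1) = y n + g (y (n - k)))
    {N : ℤ} (hN : 0 ≤ N) (hpos : ∀ n, N ≤ n → 0 < y n) :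
    Tendsto y atTop (nhds 0) := by
  set N' : ℤ := N + k with hN'
  set w : ℕ → ℝ := fun i => y (N' + i) with hw
  have hwpos : ∀ i, 0 < w i := fun i => hpos _ (by omega)
  have hanti : Antitone w := by
    apply antitone_nat_of_succ_le
    intro i
    have h1 : y (N' + i + 1) = y (N' + i) + g (y (N' + i - k)) := hrec _ (by omega)
    have h2 : 0 < y (N' + i - k) := hpos _ (by omega)
    have h3 := hneg _ h2
    have h4 : N' + ((i : ℤ) + 1) = N' + i + 1 := by ring
    simp only [hw]
    rw [show ((i + 1 : ℕ) : ℤ) = (i : ℤ) + 1 by push_cast; ring, h4, h1]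
    linarith
  have hbdd : BddBelow (Set.range w) := ⟨0, fun x ⟨i, hi⟩ => hi ▸ (hwpos i).le⟩
  have htend : Tendsto w atTop (nhds (⨅ i, w i)) := tendsto_atTop_ciInf hanti hbdd
  set c := ⨅ i, w i with hc
  have hc0 : 0 ≤ c := le_ciInf fun i => (hwpos i).le
  -- shifted sequence y (N + i) also tends to c
  have hshift : Tendsto (fun i : ℕ => y (N + i)) atTop (nhds c) := by
    have h1 : Tendsto (fun i : ℕ => w (i - k)) atTop (nhds c) :=
      htend.comp (tendsto_sub_atTop_nat k)
    apply h1.congr'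
    filter_upwards [eventually_ge_atTop k] with i hi
    simp only [hw]
    congr 1
    omega
  -- increments tend to 0 and to g c
  have hgc : g c = 0 := by
    have h1 : Tendsto (fun i : ℕ => w (i + 1) - w i) atTop (nhds (c - c)) :=
      (htend.comp (tendsto_add_atTop_nat 1)).sub htend
    rw [sub_self] at h1
    have h2 : (fun i : ℕ => w (i + 1) - w i) = fun i : ℕ => g (y (N + i)) := by
      funext i
      have hr : y (N' + i + 1) = y (N' + i) + g (y (N' + i - k)) := hrec _ (by omega)
      simp only [hw]
      rw [show ((i + 1 : ℕ) : ℤ) = (i : ℤ) + 1 by push_cast; ring,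
        show N' + ((i : ℤ) + 1) = N' + i + 1 by ring, hr,
        show N' + (i : ℤ) - k = N + i by omega]
      ring
    rw [h2] at h1
    have h3 : Tendsto (fun i : ℕ => g (y (N + i))) atTop (nhds (g c)) :=
      (hcont.tendsto c).comp hshift
    exact tendsto_nhds_unique h3 h1
  have hceq : c = 0 := by
    rcases eq_or_lt_of_le hc0 with h | h
    · exact h.symm
    · exact absurd hgc (ne_of_lt (hneg c h))
  exact tendsto_of_shift N' (hceq ▸ htend)

end

lemma sum_reindex_le {k : ℕ} {L : ℝ} (hL : 0 < L) {s : ℕ} (hs : s ≤ k + 1) :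
    ∑ i ∈ range s, min L (((k + 1 - i : ℕ) : ℝ) * L ^ 2) ≤
      ∑ v ∈ Finset.Icc 1 (k + 1), min L ((v : ℝ) * L ^ 2) := by
  have himg : ∑ v ∈ (range s).image (fun i => k + 1 - i), min L ((v : ℝ) * L ^ 2)
      = ∑ i ∈ range s, min L (((k + 1 - i : ℕ) : ℝ) * L ^ 2) :=
    Finset.sum_image (fun a ha b hb hab => by
      rw [Finset.coe_range, Set.mem_Iio] at ha hb; omega)
  rw [← himg]
  apply Finset.sum_le_sum_of_subset_of_nonneg
  · intro v hv
    rw [Finset.mem_image] at hv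
    obtain ⟨i, hi, rfl⟩ := hv
    rw [Finset.mem_range] at hi
    rw [Finset.mem_Icc]
    omega
  · intro v _ _
    exact le_min hL.le (by positivity)

lemma sum_Icc_cast (t : ℕ) : ∑ v ∈ Finset.Icc 1 t, (v : ℝ) = t * (t + 1) / 2 := by
  induction t with
  | zero => simp
  | succ t ih =>
      rw [Finset.sum_Icc_succ_top (by omega), ih]
      push_cast
      ring

lemma Ksum_lt_one {k : ℕ} {L : ℝ} (hL : 0 < L) (hcond : L * (2 * k + 3) < 3) :
    ∑ v ∈ Finset.Icc 1 (k + 1), min L ((v : ℝ) * L ^ 2) < 1 := by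
  set t : ℕ := min (k + 1) (⌊1 / L⌋₊) with ht
  have htk : t ≤ k + 1 := min_le_left _ _
  have e0 : ∀ x : ℕ, Finset.Icc 1 x = Finset.Ioc 0 x := fun x => by
    rw [← Finset.Icc_add_one_left_eq_Ioc, zero_add]
  have e1 : Finset.Icc (t + 1) (k + 1) = Finset.Ioc t (k + 1) := by
    rw [← Finset.Icc_add_one_left_eq_Ioc]
  have hsplit : ∑ v ∈ Finset.Icc 1 (k + 1), min L ((v : ℝ) * L ^ 2)
      = (∑ v ∈ Finset.Icc 1 t, min L ((v : ℝ) * L ^ 2))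
        + ∑ v ∈ Finset.Icc (t + 1) (k + 1), min L ((v : ℝ) * L ^ 2) := by
    rw [e0, e0, e1, Finset.sum_Ioc_consecutive _ (Nat.zero_le t) htk]
  have hb1 : ∑ v ∈ Finset.Icc 1 t, min L ((v : ℝ) * L ^ 2)
      ≤ L ^ 2 * (t * (t + 1) / 2) := by
    calc ∑ v ∈ Finset.Icc 1 t, min L ((v : ℝ) * L ^ 2)
        ≤ ∑ v ∈ Finset.Icc 1 t, (v : ℝ) * L ^ 2 :=
          Finset.sum_le_sum fun v _ => min_le_right _ _
      _ = (∑ v ∈ Finset.Icc 1 t, (v : ℝ)) * L ^ 2 := by rw [← Finset.sum_mul]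
      _ = L ^ 2 * (t * (t + 1) / 2) := by rw [sum_Icc_cast]; ring
  have hb2 : ∑ v ∈ Finset.Icc (t + 1) (k + 1), min L ((v : ℝ) * L ^ 2)
      ≤ ((k + 1 - t : ℕ) : ℝ) * L := by
    calc ∑ v ∈ Finset.Icc (t + 1) (k + 1), min L ((v : ℝ) * L ^ 2)
        ≤ ∑ v ∈ Finset.Icc (t + 1) (k + 1), L :=
          Finset.sum_le_sum fun v _ => min_le_left _ _
      _ = ((k + 1 - t : ℕ) : ℝ) * L := by
          rw [Finset.sum_const, Nat.card_Icc]
          simp [nsmul_eq_mul]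
  rcases le_or_gt (k + 1) (⌊1 / L⌋₊) with hcase | hcase
  · -- t = k + 1, small L regime
    have htt : t = k + 1 := by omega
    have hfl : ((k : ℝ) + 1) ≤ 1 / L := by
      have := Nat.le_floor_iff (by positivity : (0:ℝ) ≤ 1 / L) |>.1 hcase
      push_cast at this
      linarith
    have hkL : L * ((k : ℝ) + 1) ≤ 1 := by
      rw [le_div_iff₀ hL] at hfl
      linarith [hfl]
    have hk2 : L * ((k : ℝ) + 2) < 2 := by
      nlinarith [hL, hcond, mul_nonneg hL.le (Nat.cast_nonneg k : (0:ℝ) ≤ (k : ℝ))]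
    have hmain : L ^ 2 * (((k:ℝ) + 1) * ((k:ℝ) + 2) / 2) < 1 := by
      nlinarith [mul_le_mul_of_nonneg_right hkL (by positivity : (0:ℝ) ≤ L * ((k : ℝ) + 2)), hk2, hL.le]
    rw [hsplit]
    have hz : ((k + 1 - t : ℕ) : ℝ) = 0 := by rw [htt]; simp
    calc _ ≤ L ^ 2 * (t * (t + 1) / 2) + ((k + 1 - t : ℕ) : ℝ) * L := by linarith [hb1, hb2]
      _ = L ^ 2 * (((k:ℝ) + 1) * ((k:ℝ) + 2) / 2) := by rw [hz, htt]; push_cast; ring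
      _ < 1 := hmain
  · -- t = ⌊1/L⌋₊ ≤ k
    have htt : t = ⌊1 / L⌋₊ := by omega
    have htk' : t ≤ k := by omega
    have hfl : (t : ℝ) ≤ 1 / L := by
      rw [htt]; exact Nat.floor_le (by positivity)
    have hfu : 1 / L < (t : ℝ) + 1 := by
      rw [htt]; exact Nat.lt_floor_add_one _
    have htL : (t : ℝ) * L ≤ 1 := by rwa [le_div_iff₀ hL] at hfl
    have htL2 : 1 < ((t : ℝ) + 1) * L := by rwa [div_lt_iff₀ hL] at hfu
    have hP : 0 ≤ (1 - (t : ℝ) * L) * (((t : ℝ) + 1) * L - 1) :=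
      mul_nonneg (by linarith) (by linarith)
    have hcast : ((k + 1 - t : ℕ) : ℝ) = (k : ℝ) + 1 - t := by
      push_cast [Nat.cast_sub (by omega : t ≤ k + 1)]
      ring
    rw [hsplit]
    calc _ ≤ L ^ 2 * (t * (t + 1) / 2) + ((k + 1 - t : ℕ) : ℝ) * L := by linarith [hb1, hb2]
      _ < 1 := by rw [hcast]; nlinarith [hP, hcond, hL]
lemma min_scale {L d c : ℝ} (hL : 0 < L) (hd : 0 < d) (hc : 0 ≤ c) :
    L * min d (c * (L * d)) = d * min L (c * L ^ 2) := by
  rcases le_total d (c * (L * d)) with h | h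
  · rw [min_eq_left h, min_eq_left (by nlinarith : L ≤ c * L ^ 2)]
    ring
  · rw [min_eq_right h, min_eq_right (by nlinarith : c * L ^ 2 ≤ L)]
    ring

lemma semicycle_limsup_le {k : ℕ} {L : ℝ} {g : ℝ → ℝ} {y : ℤ → ℝ} {S I : ℝ}
    (hL : 0 < L)
    (hlip : ∀ u v, |g u - g v| ≤ L * |u - v|)
    (hg0 : g 0 = 0)
    (hneg : ∀ u, 0 < u → g u < 0)
    (hrec : ∀ n : ℤ, 0 ≤ n → y (n + 1) = y n + g (y (n - k)))
    (hosc : ∀ N : ℤ, ∃ n, N ≤ n ∧ y n ≤ 0)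
    (hIle : I ≤ 0)
    (hIlb : ∀ ε : ℝ, 0 < ε → ∀ᶠ n in atTop, I - ε < y n)
    (hSfreq : ∀ ε : ℝ, 0 < ε → ∃ᶠ n in atTop, S - ε < y n) :
    S ≤ (∑ v ∈ Finset.Icc 1 (k + 1), min L ((v : ℝ) * L ^ 2)) * (-I) := by
  set K := ∑ v ∈ Finset.Icc 1 (k + 1), min L ((v : ℝ) * L ^ 2) with hKdef
  have hK0 : 0 ≤ K := Finset.sum_nonneg fun v _ => le_min hL.le (by positivity)
  rcases le_or_gt S 0 with hS | hS
  · calc S ≤ 0 := hS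
      _ ≤ K * (-I) := mul_nonneg hK0 (by linarith)
  have key : ∀ ε : ℝ, 0 < ε → ε < S → S - ε ≤ K * (ε - I) := by
    intro ε hε hεS
    set d := ε - I with hd
    have hd0 : 0 < d := by rw [hd]; linarith
    obtain ⟨N₀, hN₀⟩ := eventually_atTop.1 (hIlb ε hε)
    set M : ℤ := max N₀ 0 with hM
    have hM1 : N₀ ≤ M := le_max_left _ _
    have hM2 : (0 : ℤ) ≤ M := le_max_right _ _
    obtain ⟨n₃, hn₃N, hn₃⟩ := hosc (M + 2 * k + 2)
    obtain ⟨n₂, hn₂ge, hn₂S⟩ := frequently_atTop.1 (hSfreq ε hε) (n₃ + 1)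
    have hyn₂ : 0 < y n₂ := by linarith
    obtain ⟨p, hpn₃, hpn₂, hyp, hppos⟩ := last_nonpos (by omega : n₃ ≤ n₂) hn₃ hyn₂
    have hplow : ∀ i : ℤ, p - 2 * k ≤ i → -d < y i := by
      intro i hi
      have h1 : N₀ ≤ i := by omega
      have h2 := hN₀ i h1
      rw [hd]
      linarith
    have hgub : ∀ u : ℝ, -d ≤ u → g u ≤ L * d := by
      intro u hu
      rcases le_or_gt u 0 with h0 | h0
      · have h := hlip u 0
        rw [hg0, sub_zero, sub_zero, abs_of_nonpos h0] at h
        have h2 : g u ≤ L * (-u) := le_trans (le_abs_self _) h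
        nlinarith
      · exact le_trans (hneg u h0).le (by positivity)
    obtain ⟨q, hqmem, hqmax⟩ := Finset.exists_max_image (Finset.Icc (p + 1) n₂) y
      ⟨n₂, by rw [Finset.mem_Icc]; omega⟩
    rw [Finset.mem_Icc] at hqmem
    have hyq : S - ε < y q :=
      lt_of_lt_of_le hn₂S (hqmax n₂ (by rw [Finset.mem_Icc]; omega))
    have hyqpos : 0 < y q := hppos q (by omega) hqmem.2
    have hqle : q ≤ p + k + 1 := by
      by_contra hcon
      push_neg at hcon
      have h1 : y (q - 1) ≤ y q := hqmax (q - 1) (by rw [Finset.mem_Icc]; omega)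
      have h2 := hrec (q - 1) (by omega)
      rw [show q - 1 + 1 = q by ring] at h2
      have h3 : 0 ≤ g (y (q - 1 - k)) := by linarith
      have h4 : y (q - 1 - k) ≤ 0 := by
        by_contra h5
        push_neg at h5
        exact absurd h3 (not_le.2 (hneg _ h5))
      have h6 : 0 < y (q - 1 - k) := hppos _ (by omega) (by omega)
      linarith
    set s : ℕ := (q - p).toNat with hs
    have hq_eq : q = p + s := by omega
    have hs1 : 1 ≤ s := by omega
    have hsk : s ≤ k + 1 := by omega
    -- E2 : lower bound on delayed values
    have hE2 : ∀ i : ℕ, i < s → -(min d (((k + 1 - i : ℕ) : ℝ) * (L * d))) ≤ y (p + i - k) := by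
      intro i hi
      have hik : i ≤ k := by omega
      rw [neg_le]
      apply le_min
      · have := hplow (p + i - k) (by omega)
        linarith
      · have htel := telescope hrec (p + i - k) (by omega) (k + 1 - i)
        rw [show (p + i - k) + ((k + 1 - i : ℕ) : ℤ) = p + 1 by push_cast; omega] at htel
        have hsum : ∑ i' ∈ range (k + 1 - i), g (y (p + i - k + i' - k))
            ≤ ((k + 1 - i : ℕ) : ℝ) * (L * d) := by
          have hterm : ∀ i' ∈ range (k + 1 - i), g (y (p + i - k + i' - k)) ≤ L * d := by
            intro i' hi'
            rw [Finset.mem_range] at hi'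
            apply hgub
            have := hplow (p + i - k + i' - k) (by omega)
            linarith
          calc ∑ i' ∈ range (k + 1 - i), g (y (p + i - k + i' - k))
              ≤ (range (k + 1 - i)).card • (L * d) := Finset.sum_le_card_nsmul _ _ _ hterm
            _ = ((k + 1 - i : ℕ) : ℝ) * (L * d) := by
                rw [Finset.card_range, nsmul_eq_mul]
        have hyp1 : 0 < y (p + 1) := hppos (p + 1) (by omega) (by omega)
        linarith
    -- E3 : termwise bound on the increments over the semicycle
    have hterm : ∀ i ∈ range s, g (y (p + i - k)) ≤ d * min L (((k + 1 - i : ℕ) : ℝ) * L ^ 2) := by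
      intro i hi
      rw [Finset.mem_range] at hi
      have hc0 : (0 : ℝ) ≤ ((k + 1 - i : ℕ) : ℝ) := Nat.cast_nonneg _
      rcases le_or_gt (y (p + i - k)) 0 with h0 | h0
      · have hlb := hE2 i hi
        have h := hlip (y (p + i - k)) 0
        rw [hg0, sub_zero, sub_zero, abs_of_nonpos h0] at h
        have h2 : g (y (p + i - k)) ≤ L * (-(y (p + i - k))) := le_trans (le_abs_self _) h
        have h3 : -(y (p + i - k)) ≤ min d (((k + 1 - i : ℕ) : ℝ) * (L * d)) := by linarith
        calc g (y (p + i - k)) ≤ L * (-(y (p + i - k))) := h2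
          _ ≤ L * min d (((k + 1 - i : ℕ) : ℝ) * (L * d)) :=
              mul_le_mul_of_nonneg_left h3 hL.le
          _ = d * min L (((k + 1 - i : ℕ) : ℝ) * L ^ 2) := min_scale hL hd0 hc0
      · have h1 : (0:ℝ) ≤ min L (((k + 1 - i : ℕ) : ℝ) * L ^ 2) := le_min hL.le (by positivity)
        calc g (y (p + i - k)) ≤ 0 := (hneg _ h0).le
          _ ≤ d * min L (((k + 1 - i : ℕ) : ℝ) * L ^ 2) := mul_nonneg hd0.le h1
    have htelq := telescope hrec p (by omega) s
    rw [show p + (s : ℤ) = q by omega] at htelq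
    have hsum2 : ∑ i ∈ range s, g (y (p + i - k)) ≤ d * K := by
      calc ∑ i ∈ range s, g (y (p + i - k))
          ≤ ∑ i ∈ range s, d * min L (((k + 1 - i : ℕ) : ℝ) * L ^ 2) :=
            Finset.sum_le_sum hterm
        _ = d * ∑ i ∈ range s, min L (((k + 1 - i : ℕ) : ℝ) * L ^ 2) := by
            rw [Finset.mul_sum]
        _ ≤ d * K := mul_le_mul_of_nonneg_left (sum_reindex_le hL hsk) hd0.le
    have hfin : y q ≤ d * K := by rw [htelq]; linarith
    have : d * K = K * (ε - I) := by rw [hd]; ring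
    linarith
  by_contra hcon
  push_neg at hcon
  set ε := min (S / 2) ((S - K * (-I)) / (2 * (1 + K))) with hεd
  have hε0 : 0 < ε :=
    lt_min (by linarith) (div_pos (by linarith) (by linarith))
  have hεS : ε < S := lt_of_le_of_lt (min_le_left _ _) (by linarith)
  have hkey := key ε hε0 hεS
  have hεle : ε ≤ (S - K * (-I)) / (2 * (1 + K)) := min_le_right _ _
  have h1 : (1 + K) * ε ≤ (S - K * (-I)) / 2 := by
    have h2 := mul_le_mul_of_nonneg_left hεle (by linarith : (0:ℝ) ≤ 1 + K)
    calc (1 + K) * ε ≤ (1 + K) * ((S - K * (-I)) / (2 * (1 + K))) := h2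
      _ = (S - K * (-I)) / 2 := by field_simp
  have hexp : K * (ε - I) = K * ε + K * (-I) := by ring
  nlinarith [hkey, h1, hexp]
theorem core {k : ℕ} {L G B : ℝ} {g : ℝ → ℝ} {y : ℤ → ℝ}
    (hL : 0 < L) (hG : 0 ≤ G) (hB : 0 ≤ B)
    (hK : ∑ v ∈ Finset.Icc 1 (k + 1), min L ((v : ℝ) * L ^ 2) < 1)
    (hlip : ∀ u v, |g u - g v| ≤ L * |u - v|)
    (hg0 : g 0 = 0)
    (hneg : ∀ u, 0 < u → g u < 0)
    (hpos : ∀ u, u < 0 → 0 < g u)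
    (hGle : ∀ u, g u ≤ G) (hBle : ∀ u, -B ≤ g u)
    (hrec : ∀ n : ℤ, 0 ≤ n → y (n + 1) = y n + g (y (n - k))) :
    Tendsto y atTop (nhds 0) := by
  set K := ∑ v ∈ Finset.Icc 1 (k + 1), min L ((v : ℝ) * L ^ 2) with hKdef
  have hK0 : 0 ≤ K := Finset.sum_nonneg fun v _ => le_min hL.le (by positivity)
  have hcont : Continuous g := by
    rw [Metric.continuous_iff]
    intro b δ hδ
    refine ⟨δ / L, by positivity, fun a hab => ?_⟩
    have h1 := hlip a b
    rw [Real.dist_eq] at hab ⊢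
    have h2 : L * |a - b| < L * (δ / L) := mul_lt_mul_of_pos_left hab hL
    rw [mul_div_cancel₀ _ hL.ne'] at h2
    linarith
  -- the reflected system
  set g' : ℝ → ℝ := fun u => -g (-u) with hg'
  have hlip' : ∀ u v, |g' u - g' v| ≤ L * |u - v| := by
    intro u v
    have h := hlip (-u) (-v)
    rw [show (-u) - (-v) = -(u - v) by ring, abs_neg] at h
    calc |g' u - g' v| = |g (-u) - g (-v)| := by
          rw [hg']
          rw [show -g (-u) - -g (-v) = -(g (-u) - g (-v)) by ring, abs_neg]
      _ ≤ L * |u - v| := h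
  have hg'0 : g' 0 = 0 := by rw [hg']; simp [hg0]
  have hneg' : ∀ u, 0 < u → g' u < 0 := fun u hu => by
    rw [hg']; simpa using hpos (-u) (by linarith)
  have hpos' : ∀ u, u < 0 → 0 < g' u := fun u hu => by
    rw [hg']; simpa using hneg (-u) (by linarith)
  have hcont' : Continuous g' := (hcont.comp continuous_neg).neg
  have hrec' : ∀ n : ℤ, 0 ≤ n → (fun n => -y n) (n + 1) = (fun n => -y n) n + g' ((fun n => -y n) (n - k)) := by
    intro n hn
    simp only [hg', neg_neg]
    rw [hrec n hn]
    ring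
  by_cases hc1 : ∃ N : ℤ, 0 ≤ N ∧ ∀ n, N ≤ n → 0 < y n
  · obtain ⟨N, hN0, hNpos⟩ := hc1
    exact tendsto_of_eventually_pos hcont hneg hrec hN0 hNpos
  by_cases hc2 : ∃ N : ℤ, 0 ≤ N ∧ ∀ n, N ≤ n → y n < 0
  · obtain ⟨N, hN0, hNneg⟩ := hc2
    have h := tendsto_of_eventually_pos (y := fun n => -y n) (k := k) hcont' hneg' hrec' hN0
      (fun n hn => by show (0:ℝ) < -y n; linarith [hNneg n hn])
    have h2 := h.neg
    simp only [neg_neg, neg_zero] at h2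
    exact h2
  push_neg at hc1 hc2
  have hosc₁ : ∀ N : ℤ, ∃ n, N ≤ n ∧ y n ≤ 0 := by
    intro N
    obtain ⟨n, hn1, hn2⟩ := hc1 (max N 0) (le_max_right _ _)
    exact ⟨n, le_trans (le_max_left _ _) hn1, hn2⟩
  have hosc₂ : ∀ N : ℤ, ∃ n, N ≤ n ∧ 0 ≤ y n := by
    intro N
    obtain ⟨n, hn1, hn2⟩ := hc2 (max N 0) (le_max_right _ _)
    exact ⟨n, le_trans (le_max_left _ _) hn1, hn2⟩
  -- boundedness
  obtain ⟨n₁, hn₁ge, hn₁⟩ := hosc₁ 0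
  have hub : ∀ n, n₁ ≤ n → y n ≤ ((k : ℝ) + 1) * G :=
    eventually_le_bound hrec hG hGle hneg hn₁ge hn₁
  obtain ⟨n₁', hn₁'ge, hn₁'⟩ := hosc₂ 0
  have hlb : ∀ n, n₁' ≤ n → -(((k : ℝ) + 1) * B) ≤ y n := by
    have hGle' : ∀ u, g' u ≤ B := fun u => by
      show -g (-u) ≤ B; linarith [hBle (-u)]
    have h := eventually_le_bound (y := fun n => -y n) (k := k) hrec' hB hGle' hneg' hn₁'ge
      (by simpa using hn₁')
    intro n hn
    have := h n hn
    linarith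
  have hbddA : IsBoundedUnder (· ≤ ·) atTop y :=
    ⟨((k : ℝ) + 1) * G, eventually_map.2 (eventually_atTop.2 ⟨n₁, hub⟩)⟩
  have hbddB : IsBoundedUnder (· ≥ ·) atTop y :=
    ⟨-(((k : ℝ) + 1) * B), eventually_map.2 (eventually_atTop.2 ⟨n₁', hlb⟩)⟩
  have hcobA : IsCoboundedUnder (· ≤ ·) atTop y := hbddB.isCoboundedUnder_le
  have hcobB : IsCoboundedUnder (· ≥ ·) atTop y := hbddA.isCoboundedUnder_ge
  set S := limsup y atTop with hSdef
  set I := liminf y atTop with hIdef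
  have hI0 : I ≤ 0 := by
    apply liminf_le_of_frequently_le _ hbddB
    exact frequently_atTop.2 fun a => (hosc₁ a).imp fun n hn => ⟨hn.1, hn.2⟩
  have hS0 : 0 ≤ S := by
    apply le_limsup_of_frequently_le _ hbddA
    exact frequently_atTop.2 fun a => (hosc₂ a).imp fun n hn => ⟨hn.1, hn.2⟩
  have hIlb : ∀ ε : ℝ, 0 < ε → ∀ᶠ n in atTop, I - ε < y n :=
    fun ε hε => eventually_lt_of_lt_liminf (by linarith) hbddB
  have hSub : ∀ ε : ℝ, 0 < ε → ∀ᶠ n in atTop, y n < S + ε :=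
    fun ε hε => eventually_lt_of_limsup_lt (by linarith) hbddA
  have hSfreq : ∀ ε : ℝ, 0 < ε → ∃ᶠ n in atTop, S - ε < y n :=
    fun ε hε => frequently_lt_of_lt_limsup hcobA (by linarith)
  have hIfreq : ∀ ε : ℝ, 0 < ε → ∃ᶠ n in atTop, y n < I + ε :=
    fun ε hε => frequently_lt_of_liminf_lt hcobB (by linarith)
  have h1 : S ≤ K * (-I) :=
    semicycle_limsup_le hL hlip hg0 hneg hrec hosc₁ hI0 hIlb hSfreq
  have h2 : -I ≤ K * S := by
    have hIlb' : ∀ ε : ℝ, 0 < ε → ∀ᶠ n in atTop, -S - ε < (fun n => -y n) n := by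
      intro ε hε
      filter_upwards [hSub ε hε] with n hn
      show -S - ε < -y n
      linarith
    have hSfreq' : ∀ ε : ℝ, 0 < ε → ∃ᶠ n in atTop, -I - ε < (fun n => -y n) n := by
      intro ε hε
      apply (hIfreq ε hε).mono
      intro n hn
      show -I - ε < -y n
      linarith
    have hosc' : ∀ N : ℤ, ∃ n, N ≤ n ∧ (fun n => -y n) n ≤ 0 := by
      intro N
      obtain ⟨n, hn1, hn2⟩ := hosc₂ N
      exact ⟨n, hn1, by simpa using hn2⟩
    have h := semicycle_limsup_le (S := -I) (I := -S) hL hlip' hg'0 hneg' hrec' hosc'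
      (by linarith) hIlb' hSfreq'
    rw [neg_neg] at h
    exact h
  have hKK : 0 < 1 - K * K := by nlinarith [hK, hK0]
  have hSz : S ≤ 0 := by nlinarith [h1, mul_le_mul_of_nonneg_left h2 hK0, hKK, hS0]
  have hSeq : S = 0 := le_antisymm hSz hS0
  have hIeq : I = 0 := by
    rw [hSeq] at h2
    have : -I ≤ 0 := by linarith [h2]
    linarith [hI0, this]
  exact tendsto_of_liminf_eq_limsup hIeq hSeq hbddA hbddB
end BQ

open Filter BQ

set_option maxHeartbeats 2000000 in
/-- Global attractivity in the bobwhite quail model: if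
`m + 3/2 < (3/2)(2α + β + 2√(α² + αβ))/(βr)`, then every positive solution of
`A_{n+1} = A_n (α + β/(1 + A_{n-m}^r))` converges to
`x̄ = ((α+β-1)/(1-α))^{1/r}`. -/
theorem stmt_9 (α β r : ℝ) (m : ℕ) (hα : 0 < α) (hα1 : α < 1) (hβ : 0 < β)
    (hαβ : 1 < α + β) (hr : 0 < r)
    (hcond : (m : ℝ) + 3 / 2 <
      3 / 2 * (2 * α + β + 2 * Real.sqrt (α ^ 2 + α * β)) / (β * r))
    (A : ℤ → ℝ)
    (hApos : ∀ n : ℤ, -(m : ℤ) ≤ n → 0 < A n)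
    (hArec : ∀ n : ℤ, 0 ≤ n →
      A (n + 1) = A n * (α + β / (1 + (A (n - m)) ^ r))) :
    Filter.Tendsto A Filter.atTop
      (nhds (((α + β - 1) / (1 - α)) ^ (1 / r))) := by
  have h1α : (0:ℝ) < 1 - α := by linarith
  set T : ℝ := (α + β - 1) / (1 - α) with hTdef
  have hT0 : 0 < T := div_pos (by linarith) h1α
  set xb : ℝ := T ^ (1 / r) with hxbdef
  have hxb0 : 0 < xb := Real.rpow_pos_of_pos hT0 _
  set g : ℝ → ℝ := fun u => Real.log (α + β / (1 + T * Real.exp (r * u))) with hgdef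
  set y : ℤ → ℝ := fun n => Real.log (A n) - Real.log xb with hydef
  have hw : ∀ u : ℝ, 0 < 1 + T * Real.exp (r * u) := fun u => by positivity
  have hFpos : ∀ u : ℝ, 0 < α + β / (1 + T * Real.exp (r * u)) := fun u => by positivity
  have h1T : 1 + T = β / (1 - α) := by
    rw [hTdef]
    field_simp
    ring
  have hβT : β / (1 + T) = 1 - α := by
    rw [h1T, div_div_eq_mul_div, mul_comm β (1 - α), mul_div_assoc, div_self hβ.ne', mul_one]
  have hg0 : g 0 = 0 := by
    show Real.log (α + β / (1 + T * Real.exp (r * 0))) = 0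
    rw [mul_zero, Real.exp_zero, mul_one, show α + β / (1 + T) = 1 by rw [hβT]; ring,
      Real.log_one]
  have hmono1 : ∀ u : ℝ, 0 < u → α + β / (1 + T * Real.exp (r * u)) < 1 := by
    intro u hu
    have he : 1 < Real.exp (r * u) := by
      rw [← Real.exp_zero]
      exact Real.exp_lt_exp.2 (by positivity)
    have hlt : 1 + T < 1 + T * Real.exp (r * u) := by nlinarith [hT0]
    have h3 : β / (1 + T * Real.exp (r * u)) < β / (1 + T) :=
      div_lt_div_of_pos_left hβ (by linarith) hlt
    rw [hβT] at h3
    linarith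
  have hmono2 : ∀ u : ℝ, u < 0 → 1 < α + β / (1 + T * Real.exp (r * u)) := by
    intro u hu
    have he : Real.exp (r * u) < 1 := by
      rw [← Real.exp_zero]
      exact Real.exp_lt_exp.2 (by nlinarith)
    have hlt : 1 + T * Real.exp (r * u) < 1 + T := by nlinarith [hT0]
    have h3 : β / (1 + T) < β / (1 + T * Real.exp (r * u)) :=
      div_lt_div_of_pos_left hβ (hw u) hlt
    rw [hβT] at h3
    linarith
  have hneg : ∀ u : ℝ, 0 < u → g u < 0 := fun u hu => Real.log_neg (hFpos u) (hmono1 u hu)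
  have hpos : ∀ u : ℝ, u < 0 → 0 < g u := fun u hu => Real.log_pos (hmono2 u hu)
  have hGnn : 0 ≤ Real.log (α + β) := Real.log_nonneg (by linarith)
  have hBnn : 0 ≤ -Real.log α := by linarith [Real.log_neg hα hα1]
  have hGle : ∀ u : ℝ, g u ≤ Real.log (α + β) := by
    intro u
    show Real.log (α + β / (1 + T * Real.exp (r * u))) ≤ Real.log (α + β)
    rw [Real.log_le_log_iff (hFpos u) (by linarith)]
    have h1 : β / (1 + T * Real.exp (r * u)) ≤ β :=
      div_le_self hβ.le (by nlinarith [Real.exp_pos (r * u), hT0])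
    linarith
  have hBle : ∀ u : ℝ, -(-Real.log α) ≤ g u := by
    intro u
    rw [neg_neg]
    show Real.log α ≤ Real.log (α + β / (1 + T * Real.exp (r * u)))
    rw [Real.log_le_log_iff hα (hFpos u)]
    have h1 : 0 < β / (1 + T * Real.exp (r * u)) := div_pos hβ (hw u)
    linarith
  -- derivative and Lipschitz bound
  set D : ℝ := 2 * α + β + 2 * Real.sqrt (α ^ 2 + α * β) with hDdef
  have hD0 : 0 < D := by
    rw [hDdef]
    have := Real.sqrt_nonneg (α ^ 2 + α * β)
    nlinarith
  set L : ℝ := β * r / D with hLdef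
  have hL0 : 0 < L := by rw [hLdef]; positivity
  have ha2 : Real.sqrt α ^ 2 = α := Real.sq_sqrt hα.le
  have hb2 : Real.sqrt (α + β) ^ 2 = α + β := Real.sq_sqrt (by linarith)
  have hsq : Real.sqrt (α ^ 2 + α * β) = Real.sqrt α * Real.sqrt (α + β) := by
    rw [← Real.sqrt_mul hα.le]
    congr 1
    ring
  set gd : ℝ → ℝ := fun u =>
    β * (-(T * (Real.exp (r * u) * r)) / (1 + T * Real.exp (r * u)) ^ 2) /
      (α + β / (1 + T * Real.exp (r * u))) with hgddef
  have hder : ∀ u : ℝ, HasDerivAt g (gd u) u := by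
    intro u
    have h1 : HasDerivAt (fun x : ℝ => r * x) r u := by
      simpa using (hasDerivAt_id u).const_mul r
    have h2 : HasDerivAt (fun x : ℝ => Real.exp (r * x)) (Real.exp (r * u) * r) u := h1.exp
    have h3 : HasDerivAt (fun x : ℝ => T * Real.exp (r * x)) (T * (Real.exp (r * u) * r)) u :=
      h2.const_mul T
    have h4 : HasDerivAt (fun x : ℝ => 1 + T * Real.exp (r * x)) (T * (Real.exp (r * u) * r)) u :=
      h3.const_add 1
    have h5 := h4.inv (ne_of_gt (hw u))
    have h6 := (h5.const_mul β).const_add α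
    have h7 : (fun x : ℝ => α + β * (1 + T * Real.exp (r * x))⁻¹)
        = fun x : ℝ => α + β / (1 + T * Real.exp (r * x)) := by
      funext x
      rw [div_eq_mul_inv]
    simp only [Pi.inv_apply] at h6
    rw [h7] at h6
    exact h6.log (ne_of_gt (hFpos u))
  have hgdb : ∀ u : ℝ, |gd u| ≤ L := by
    intro u
    have he0 : 0 < Real.exp (r * u) := Real.exp_pos _
    set s : ℝ := T * Real.exp (r * u) with hsdef
    have hs0 : 0 < s := by positivity
    have hw0 : 0 < 1 + s := by linarith
    have hαw : 0 < α * (1 + s) + β := by nlinarith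
    have hgd_eq : gd u = -(β * s * r / ((1 + s) * (α * (1 + s) + β))) := by
      show β * (-(T * (Real.exp (r * u) * r)) / (1 + T * Real.exp (r * u)) ^ 2) /
        (α + β / (1 + T * Real.exp (r * u))) = _
      rw [← hsdef]
      field_simp
      ring
    rw [hgd_eq, abs_neg, abs_of_nonneg (by positivity)]
    rw [div_le_iff₀ (by positivity)]
    have hkey : s * D ≤ (1 + s) * (α * (1 + s) + β) := by
      rw [hDdef, hsq]
      have hexp : 0 ≤ α * s ^ 2 - 2 * (Real.sqrt α * Real.sqrt (α + β)) * s + (α + β) := by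
        have h0 := sq_nonneg (Real.sqrt α * s - Real.sqrt (α + β))
        nlinarith [ha2, hb2, h0]
      nlinarith [hexp]
    rw [hLdef, div_mul_eq_mul_div, le_div_iff₀ hD0]
    nlinarith [mul_le_mul_of_nonneg_left hkey (show (0:ℝ) ≤ β * r by positivity)]
  have hcontg : Continuous g :=
    continuous_iff_continuousAt.2 fun x => (hder x).continuousAt
  have hlip : ∀ u v : ℝ, |g u - g v| ≤ L * |u - v| := by
    have main : ∀ u v : ℝ, u < v → |g v - g u| ≤ L * |v - u| := by
      intro u v huv
      obtain ⟨c, _, hceq⟩ := exists_hasDerivAt_eq_slope g gd huv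
        hcontg.continuousOn (fun x _ => hder x)
      have h1 : g v - g u = gd c * (v - u) := by
        rw [hceq, div_mul_cancel₀ _ (sub_ne_zero.2 huv.ne')]
      rw [h1, abs_mul]
      exact mul_le_mul_of_nonneg_right (hgdb c) (abs_nonneg _)
    intro u v
    rcases lt_trichotomy u v with h | h | h
    · rw [abs_sub_comm (g u), abs_sub_comm u]
      exact main u v h
    · subst h
      simp
    · exact main v u h
  -- recurrence for y
  have hrec : ∀ n : ℤ, 0 ≤ n → y (n + 1) = y n + g (y (n - m)) := by
    intro n hn
    have hAn : 0 < A n := hApos n (by omega)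
    have hAnm : 0 < A (n - m) := hApos (n - m) (by omega)
    have hlxb : Real.log xb = 1 / r * Real.log T := by
      rw [hxbdef, Real.log_rpow hT0]
    have hrp : (A (n - m)) ^ r = T * Real.exp (r * y (n - m)) := by
      have h2 : 0 < T * Real.exp (r * y (n - m)) := by positivity
      have h3 : 0 < (A (n - m)) ^ r := Real.rpow_pos_of_pos hAnm r
      apply Real.log_injOn_pos (Set.mem_Ioi.2 h3) (Set.mem_Ioi.2 h2)
      rw [Real.log_rpow hAnm, Real.log_mul (ne_of_gt hT0) (Real.exp_ne_zero _), Real.log_exp]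
      show r * Real.log (A (n - m))
          = Real.log T + r * (Real.log (A (n - m)) - Real.log xb)
      rw [hlxb]
      field_simp
      ring
    have hstep : A (n + 1) = A n * (α + β / (1 + T * Real.exp (r * y (n - m)))) := by
      rw [hArec n hn, hrp]
    have hlog : Real.log (A (n + 1))
        = Real.log (A n) + Real.log (α + β / (1 + T * Real.exp (r * y (n - m)))) := by
      rw [hstep]
      exact Real.log_mul (ne_of_gt hAn) (ne_of_gt (hFpos _))
    show Real.log (A (n + 1)) - Real.log xb
        = Real.log (A n) - Real.log xb
          + Real.log (α + β / (1 + T * Real.exp (r * y (n - m))))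
    rw [hlog]
    ring
  -- the 3/2 condition
  have hβr : 0 < β * r := by positivity
  have hc1 : ((m : ℝ) + 3 / 2) * (β * r) < 3 / 2 * D := (lt_div_iff₀ hβr).1 hcond
  have hcondL : L * (2 * (m : ℝ) + 3) < 3 := by
    rw [hLdef, div_mul_eq_mul_div, div_lt_iff₀ hD0]
    nlinarith [hc1]
  have hKlt : ∑ v ∈ Finset.Icc 1 (m + 1), min L ((v : ℝ) * L ^ 2) < 1 :=
    Ksum_lt_one hL0 hcondL
  have hylim : Tendsto y atTop (nhds 0) :=
    core hL0 hGnn hBnn hKlt hlip hg0 hneg hpos hGle hBle hrec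
  have hxb' : Tendsto (fun n : ℤ => Real.exp (y n + Real.log xb)) atTop (nhds xb) := by
    have h1 : Tendsto (fun n : ℤ => y n + Real.log xb) atTop (nhds (0 + Real.log xb)) :=
      hylim.add tendsto_const_nhds
    rw [zero_add] at h1
    have h2 := (Real.continuous_exp.tendsto (Real.log xb)).comp h1
    rw [Real.exp_log hxb0] at h2
    exact h2
  apply hxb'.congr'
  filter_upwards [eventually_ge_atTop (-(m : ℤ))] with n hn
  show Real.exp (y n + Real.log xb) = A n
  rw [show y n + Real.log xb = Real.log (A n) by
    show Real.log (A n) - Real.log xb + Real.log xb = _; ring]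
  exact Real.exp_log (hApos n hn)
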